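/- Let E be a locally convex topological vector space over the reals with topological dual E*, and endow E* with any locally convex topology. If the evaluation mapping ev : E × E* → ℝ, ev(x, x*) = x*(x), is jointly continuous, then the topology on E is normable (i.e., E admits a bounded neighbourhood of zero). -/

import Mathlib

open Set Filter Topology Metric Pointwise

/-- A linear functional bounded by `1` on a neighbourhood of zero is continuous. -/
lemma aux_continuous_of_bounded_on_nhds {E : Type*} [AddCommGroup E] [Module ℝ E]
    [TopologicalSpace E] [IsTopologicalAddGroup E] [ContinuousSMul ℝ E]
    {D : Set E} (hD : D ∈ 𝓝 (0 : E)) (f : E →ₗ[ℝ] ℝ) (hf : ∀ y ∈ D, |f y| ≤ 1) :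
    Continuous f := by
  apply continuous_of_continuousAt_zero f
  rw [ContinuousAt, map_zero, Metric.tendsto_nhds]
  intro ε hε
  have h2 : (ε / 2) • D ∈ 𝓝 (0 : E) :=
    (set_smul_mem_nhds_zero_iff (by positivity : (ε / 2 : ℝ) ≠ 0)).2 hD
  filter_upwards [h2] with x hx
  obtain ⟨d, hd, rfl⟩ := hx
  have := hf d hd
  rw [Real.dist_eq, sub_zero, map_smul, smul_eq_mul, abs_mul, abs_of_pos (by positivity)]
  nlinarith

/-- A weakly bounded set in a real locally convex space is von Neumann bounded
(Mackey's theorem, special case). -/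
lemma aux_isVonNBounded_of_weakly_bounded {E : Type*} [AddCommGroup E] [Module ℝ E]
    [TopologicalSpace E] [IsTopologicalAddGroup E] [ContinuousSMul ℝ E] [LocallyConvexSpace ℝ E]
    {U : Set E} (hU : ∀ f : E →L[ℝ] ℝ, ∃ C, ∀ x ∈ U, |f x| ≤ C) :
    Bornology.IsVonNBounded ℝ U := by
  intro W hW
  -- Reduce to a closed absolutely convex neighbourhood `D ⊆ W`.
  obtain ⟨W₁, ⟨hW₁, hW₁c⟩, hW₁W⟩ := (closed_nhds_basis (0 : E)).mem_iff.mp hW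
  obtain ⟨D₀, ⟨hD₀, hD₀b, hD₀conv⟩, hD₀W⟩ := (nhds_hasBasis_absConvex ℝ E).mem_iff.mp hW₁
  set D : Set E := closure D₀ with hDdef
  have hD : D ∈ 𝓝 (0 : E) := mem_of_superset hD₀ subset_closure
  have hDb : Balanced ℝ D := hD₀b.closure
  have hDconv : Convex ℝ D := hD₀conv.closure
  have hDcl : IsClosed D := isClosed_closure
  have hDW : D ⊆ W := by
    refine Subset.trans ?_ hW₁W
    rw [hDdef, ← hW₁c.closure_eq]
    exact closure_mono hD₀W
  have h0D : (0 : E) ∈ D := mem_of_mem_nhds hD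
  -- The compact set of linear functionals bounded by 1 on D.
  set K : Set (E → ℝ) := {f | (∀ a b, f (a + b) = f a + f b) ∧
      (∀ (c : ℝ) (x : E), f (c • x) = c * f x) ∧ ∀ y ∈ D, |f y| ≤ 1} with hKdef
  -- pointwise bounds on K from absorbency of D
  have hcx : ∀ x : E, ∃ c : ℝ, 0 < c ∧ ∀ f ∈ K, |f x| ≤ c := by
    intro x
    obtain ⟨r, hr, hrabs⟩ := ((absorbent_nhds_zero (𝕜 := ℝ) hD) x).exists_pos
    have hx : x ∈ r • D := by
      have := hrabs r (by rw [Real.norm_eq_abs, abs_of_pos hr])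
      exact this rfl
    obtain ⟨d, hd, rfl⟩ := hx
    refine ⟨r, hr, fun f hf => ?_⟩
    rw [hf.2.1 r d, abs_mul, abs_of_pos hr]
    have := hf.2.2 d hd
    nlinarith
  choose c hc0 hc using hcx
  -- K is compact
  have hKsub : K ⊆ Set.pi univ fun x => Icc (-(c x)) (c x) := fun f hf =>
    fun x _ => abs_le.mp (hc x f hf)
  have hKcl : IsClosed K := by
    have h1 : IsClosed {f : E → ℝ | ∀ a b, f (a + b) = f a + f b} := by
      simp only [setOf_forall]
      exact isClosed_iInter fun a => isClosed_iInter fun b =>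
        isClosed_eq (continuous_apply (a + b)) ((continuous_apply a).add (continuous_apply b))
    have h2 : IsClosed {f : E → ℝ | ∀ (r : ℝ) (x : E), f (r • x) = r * f x} := by
      simp only [setOf_forall]
      exact isClosed_iInter fun r => isClosed_iInter fun x =>
        isClosed_eq (continuous_apply (r • x)) (continuous_const.mul (continuous_apply x))
    have h3 : IsClosed {f : E → ℝ | ∀ y ∈ D, |f y| ≤ 1} := by
      simp only [setOf_forall]
      exact isClosed_iInter fun y => isClosed_iInter fun _ =>
        isClosed_le (continuous_apply y).abs continuous_const
    have : K = {f : E → ℝ | ∀ a b, f (a + b) = f a + f b} ∩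
        ({f : E → ℝ | ∀ (r : ℝ) (x : E), f (r • x) = r * f x} ∩
         {f : E → ℝ | ∀ y ∈ D, |f y| ≤ 1}) := by
      ext f; simp [hKdef, and_assoc]
    rw [this]
    exact h1.inter (h2.inter h3)
  have hK : IsCompact K :=
    (isCompact_univ_pi fun x => isCompact_Icc).of_isClosed_subset hKcl hKsub
  have h0K : (0 : E → ℝ) ∈ K := by
    refine ⟨fun a b => by simp, fun r x => by simp, fun y _ => by simp⟩
  -- uniform bound over K on U, via Baire category on the compact space K
  have key : ∃ C : ℝ, 0 < C ∧ ∀ f ∈ K, ∀ x ∈ U, |f x| ≤ C := by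
    haveI : CompactSpace K := isCompact_iff_compactSpace.mp hK
    haveI : Nonempty K := ⟨⟨0, h0K⟩⟩
    set A : ℕ → Set K := fun n => {f | ∀ x ∈ U, |f.1 x| ≤ n} with hAdef
    have hAcl : ∀ n, IsClosed (A n) := by
      intro n
      have : A n = ⋂ x ∈ U, {f : K | |f.1 x| ≤ n} := by
        ext f; simp [hAdef]
      rw [this]
      exact isClosed_biInter fun x _ =>
        isClosed_le ((continuous_apply x).comp continuous_subtype_val).abs continuous_const
    have hAun : ⋃ n, A n = univ := by
      rw [eq_univ_iff_forall]
      intro f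
      set g : E →ₗ[ℝ] ℝ :=
        { toFun := f.1
          map_add' := f.2.1
          map_smul' := fun r x => by simpa [smul_eq_mul] using f.2.2.1 r x } with hgdef
      have hgc : Continuous g := aux_continuous_of_bounded_on_nhds hD g f.2.2.2
      obtain ⟨C, hC⟩ := hU ⟨g, hgc⟩
      refine mem_iUnion.mpr ⟨⌈C⌉₊, fun x hx => ?_⟩
      exact le_trans (hC x hx) (Nat.le_ceil C)
    obtain ⟨n, f₀, hf₀⟩ := nonempty_interior_of_iUnion_of_closed hAcl hAun
    have hf₀An : f₀ ∈ A n := interior_subset hf₀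
    -- extract a basic neighbourhood in the pi topology
    have hAnn : A n ∈ 𝓝 f₀ := mem_interior_iff_mem_nhds.mp hf₀
    rw [nhds_induced] at hAnn
    obtain ⟨O, hO, hOA⟩ := hAnn
    rw [nhds_pi, Filter.mem_pi] at hO
    obtain ⟨I, hIfin, tset, htset, htsub⟩ := hO
    have hε : ∀ x : E, ∃ ε : ℝ, 0 < ε ∧ ball (f₀.1 x) ε ⊆ tset x := by
      intro x
      exact Metric.mem_nhds_iff.mp (htset x)
    choose ε hεpos hεsub using hε
    -- choose a uniform small s > 0
    have hs : ∃ s : ℝ, 0 < s ∧ s ≤ 1 ∧ ∀ x ∈ I, s * (2 * c x) < ε x := by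
      classical
      set J := hIfin.toFinset with hJ
      by_cases hJne : J.Nonempty
      · refine ⟨min 1 (J.inf' hJne fun x => ε x / (2 * c x + 1)), ?_, min_le_left _ _, ?_⟩
        · refine lt_min one_pos ?_
          rw [Finset.lt_inf'_iff]
          intro x _
          have := hc0 x
          have := hεpos x
          positivity
        · intro x hxI
          have hxJ : x ∈ J := hIfin.mem_toFinset.mpr hxI
          have h1 : min 1 (J.inf' hJne fun x => ε x / (2 * c x + 1)) ≤
              ε x / (2 * c x + 1) := le_trans (min_le_right _ _) (Finset.inf'_le _ hxJ)
          have hpos : (0:ℝ) < 2 * c x + 1 := by have := hc0 x; linarith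
          have h2 : min 1 (J.inf' hJne fun x => ε x / (2 * c x + 1)) * (2 * c x + 1) ≤ ε x := by
            rw [← le_div_iff₀ hpos]; exact h1
          have h3 : 0 < min 1 (J.inf' hJne fun x => ε x / (2 * c x + 1)) := by
            refine lt_min one_pos ?_
            rw [Finset.lt_inf'_iff]
            intro y _
            have := hc0 y
            have := hεpos y
            positivity
          nlinarith
      · refine ⟨1, one_pos, le_refl _, fun x hxI => ?_⟩
        exact absurd ⟨x, hIfin.mem_toFinset.mpr hxI⟩ hJne
    obtain ⟨s, hs0, hs1, hsI⟩ := hs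
    refine ⟨2 * n / s + 1, by positivity, fun f hf x hx => ?_⟩
    -- the perturbed functional g = f₀ + s (f - f₀)
    set g : E → ℝ := fun y => f₀.1 y + s * (f y - f₀.1 y) with hgdef
    have hgK : g ∈ K := by
      refine ⟨fun a b => ?_, fun r y => ?_, fun y hy => ?_⟩
      · simp only [hgdef, hf.1, f₀.2.1]; ring
      · simp only [hgdef, hf.2.1, f₀.2.2.1]; ring
      · have h1 : |f₀.1 y| ≤ 1 := f₀.2.2.2 y hy
        have h2 : |f y| ≤ 1 := hf.2.2 y hy
        have : g y = (1 - s) * f₀.1 y + s * f y := by rw [hgdef]; ring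
        rw [this]
        calc |(1 - s) * f₀.1 y + s * f y| ≤ |(1 - s) * f₀.1 y| + |s * f y| := abs_add_le _ _
          _ = (1 - s) * |f₀.1 y| + s * |f y| := by
              rw [abs_mul, abs_mul, abs_of_nonneg (by linarith), abs_of_pos hs0]
          _ ≤ (1 - s) * 1 + s * 1 := by
              gcongr <;> linarith
          _ = 1 := by ring
    have hgO : (⟨g, hgK⟩ : K) ∈ Subtype.val ⁻¹' O := by
      refine mem_preimage.mpr (htsub fun y hyI => ?_)
      refine hεsub y ?_
      rw [mem_ball, Real.dist_eq]
      have h1 : |f y| ≤ c y := hc y f hf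
      have h2 : |f₀.1 y| ≤ c y := hc y f₀.1 f₀.2
      have : g y - f₀.1 y = s * (f y - f₀.1 y) := by rw [hgdef]; ring
      rw [this, abs_mul, abs_of_pos hs0]
      have h3 : |f y - f₀.1 y| ≤ 2 * c y := by
        calc |f y - f₀.1 y| ≤ |f y| + |f₀.1 y| := abs_sub _ _
          _ ≤ 2 * c y := by linarith
      calc s * |f y - f₀.1 y| ≤ s * (2 * c y) := by gcongr
        _ < ε y := hsI y hyI
    have hgAn : (⟨g, hgK⟩ : K) ∈ A n := hOA hgO
    have hg_x : |g x| ≤ n := hgAn x hx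
    have hf₀_x : |f₀.1 x| ≤ n := hf₀An x hx
    have : s * f x = g x - (1 - s) * f₀.1 x := by rw [hgdef]; ring
    have habs : s * |f x| ≤ 2 * n := by
      have h4 : |s * f x| ≤ |g x| + (1 - s) * |f₀.1 x| := by
        rw [this]
        calc |g x - (1 - s) * f₀.1 x| ≤ |g x| + |(1 - s) * f₀.1 x| := abs_sub _ _
          _ = |g x| + (1 - s) * |f₀.1 x| := by rw [abs_mul, abs_of_nonneg (show (0:ℝ) ≤ 1 - s by linarith)]
      rw [abs_mul, abs_of_pos hs0] at h4
      have h5 : (1 - s) * |f₀.1 x| ≤ (n : ℝ) := by nlinarith [abs_nonneg (f₀.1 x)]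
      linarith
    have : |f x| ≤ 2 * n / s := by
      rw [le_div_iff₀ hs0]; linarith [mul_comm s (|f x|)]
    linarith
  obtain ⟨C, hC0, hC⟩ := key
  -- From the uniform bound, U ⊆ (C + 1) • D via Hahn-Banach separation
  have hUD : U ⊆ (C + 1) • D := by
    intro x hx
    by_contra hxD
    have hr : (0:ℝ) < C + 1 := by linarith
    rw [mem_smul_set_iff_inv_smul_mem₀ hr.ne'] at hxD
    obtain ⟨φ, u, hφD, hφx⟩ :=
      geometric_hahn_banach_closed_point hDconv hDcl hxD
    have hu : 0 < u := by simpa using hφD 0 h0D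
    set g : E → ℝ := fun y => φ y / u with hgdef
    have hgK : g ∈ K := by
      refine ⟨fun a b => by simp [hgdef, map_add]; ring,
        fun r y => by simp [hgdef, map_smul, smul_eq_mul]; ring, fun y hy => ?_⟩
      have hy1 : φ y < u := hφD y hy
      have hy2 : φ (-y) < u := hφD (-y) (by simpa using hDb.neg_mem_iff.mpr hy)
      rw [map_neg] at hy2
      rw [hgdef]
      rw [abs_div, abs_of_pos hu, div_le_one hu, abs_le]
      constructor <;> nlinarith
    have hgx : |g x| ≤ C := hC g hgK x hx
    have hgx' : g x = (C + 1) * g ((C + 1)⁻¹ • x) := by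
      rw [hgdef]
      simp only [map_smul, smul_eq_mul]
      field_simp
    have hbig : C + 1 < g x := by
      rw [hgx']
      have h6 : 1 < g ((C + 1)⁻¹ • x) := by
        rw [hgdef, lt_div_iff₀ hu]
        simpa using hφx
      nlinarith
    have : |g x| ≤ C := hgx
    rw [abs_le] at this
    linarith
  -- conclude absorption
  have hDbal : Balanced ℝ D := hDb
  refine absorbs_iff_norm.2 ⟨C + 1, fun a ha => ?_⟩
  refine hUD.trans (Subset.trans ?_ (smul_set_mono hDW))
  exact hDbal.smul_mono (by rw [Real.norm_eq_abs, abs_of_pos (by linarith)]; exact ha)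

/-- If `E` is a locally convex topological vector space over `ℝ`, its topological dual
`E →L[ℝ] ℝ` is endowed with any locally convex (vector space) topology `t`, and the
evaluation map `ev (x, x*) = x* x` is jointly continuous, then `E` admits a bounded
neighbourhood of zero (i.e. the topology of `E` is normable). -/
theorem evaluation_jointly_continuous_implies_normable
    {E : Type*} [AddCommGroup E] [Module ℝ E] [TopologicalSpace E]
    [IsTopologicalAddGroup E] [ContinuousSMul ℝ E] [LocallyConvexSpace ℝ E]
    (t : TopologicalSpace (E →L[ℝ] ℝ))
    (ht1 : @IsTopologicalAddGroup (E →L[ℝ] ℝ) t _)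
    (ht2 : @ContinuousSMul ℝ (E →L[ℝ] ℝ) _ _ t)
    (ht3 : @LocallyConvexSpace ℝ (E →L[ℝ] ℝ) _ _ _ _ t)
    (hev : @Continuous (E × (E →L[ℝ] ℝ)) ℝ
      (@instTopologicalSpaceProd E (E →L[ℝ] ℝ) _ t) _
      (fun p => p.2 p.1)) :
    ∃ U ∈ nhds (0 : E), Bornology.IsVonNBounded ℝ U := by
  letI := t
  haveI := ht1
  haveI := ht2
  haveI := ht3
  -- joint continuity at (0, 0)
  have h0 : ContinuousAt (fun p : E × (E →L[ℝ] ℝ) => p.2 p.1) (0, 0) := hev.continuousAt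
  have hball : Metric.closedBall (0 : ℝ) 1 ∈ 𝓝 ((fun p : E × (E →L[ℝ] ℝ) => p.2 p.1) (0, 0)) := by
    simpa using Metric.closedBall_mem_nhds (0 : ℝ) one_pos
  have hpre := h0.preimage_mem_nhds hball
  rw [mem_nhds_prod_iff] at hpre
  obtain ⟨U, hU, V, hV, hUV⟩ := hpre
  refine ⟨U, hU, aux_isVonNBounded_of_weakly_bounded fun f => ?_⟩
  obtain ⟨r, hr, hrabs⟩ := ((absorbent_nhds_zero (𝕜 := ℝ) hV) f).exists_pos
  have hf : f ∈ r • V :=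
    hrabs r (by rw [Real.norm_eq_abs, abs_of_pos hr]) rfl
  obtain ⟨g, hg, rfl⟩ := hf
  refine ⟨r, fun x hx => ?_⟩
  have hm : (x, g) ∈ U ×ˢ V := ⟨hx, hg⟩
  have := hUV hm
  simp only [Set.mem_preimage, Metric.mem_closedBall, Real.dist_eq, sub_zero] at this
  have h1 : |g x| ≤ 1 := by simpa [Real.dist_eq] using this
  rw [ContinuousLinearMap.smul_apply, smul_eq_mul, abs_mul, abs_of_pos hr]
  nlinarith
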